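/- Let U, V be k-dimensional subspaces of F_q^n with U = rowspace(A) and V = rowspace(B), where A, B are k × n matrices over F_q in inverse reduced row echelon form. If the inverse identifying vectors satisfy v̂(A) = v̂(B), then d_S(U, V) = 2·d_R(C_A, C_B), where C_A and C_B denote the k × (n − k) submatrices of A and B obtained by deleting the pivot columns, and d_R denotes rank distance. -/

import Mathlib

open Module

/-- The subspace distance `d_S(U,V) = dim U + dim V - 2 dim (U ⊓ V)`. -/
noncomputable def subDist {F : Type*} [Field F] {n : ℕ}
    (U V : Submodule F (Fin n → F)) : ℕ :=
  finrank F U + finrank F V - 2 * finrank F (U ⊓ V : Submodule F (Fin n → F))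

/-- The rank distance `d_R(A,B) = rank (A - B)`. -/
noncomputable def rankDist {F : Type*} [Field F] {m n : ℕ}
    (A B : Matrix (Fin m) (Fin n) F) : ℕ :=
  (A - B).rank

/-- `A` is a `k × n` matrix in inverse reduced row echelon form with pivot (leading one)
of row `i` in column `p i`: the pivots move strictly to the left, each pivot entry
is `1` and is the first nonzero entry of its row, and each pivot is the only
nonzero entry in its column. -/
def IsInvRREF {F : Type*} [Field F] {k n : ℕ}
    (A : Matrix (Fin k) (Fin n) F) (p : Fin k → Fin n) : Prop :=
  StrictAnti p ∧ (∀ i, A i (p i) = 1) ∧ (∀ i j, j < p i → A i j = 0) ∧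
    (∀ i i', i' ≠ i → A i' (p i) = 0)

/-- The identifying vector of a matrix in inverse RREF with pivot columns `p`,
as a Boolean vector of length `n` whose `1`s are exactly at the pivot positions. -/
def identifyingVector {k n : ℕ} (p : Fin k → Fin n) : Fin n → Bool :=
  fun j => decide (∃ i, p i = j)

open Matrix

section Aux

variable {F : Type*} [Field F] {k n : ℕ}

/-- Evaluating a linear combination of the rows of an inverse-RREF matrix at a pivot
column recovers the coefficient. -/
lemma sum_smul_apply_pivot (A : Matrix (Fin k) (Fin n) F) (p : Fin k → Fin n)
    (hA : IsInvRREF A p) (g : Fin k → F) (i : Fin k) :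
    (∑ j, g j • A j) (p i) = g i := by
  rw [Finset.sum_apply]
  rw [Finset.sum_eq_single i]
  · simp [hA.2.1 i]
  · intro j _ hj
    simp [hA.2.2.2 i j hj]
  · simp

lemma rows_linearIndependent (A : Matrix (Fin k) (Fin n) F) (p : Fin k → Fin n)
    (hA : IsInvRREF A p) : LinearIndependent F (fun i => A i) := by
  rw [Fintype.linearIndependent_iff]
  intro g hg i
  have := sum_smul_apply_pivot A p hA g i
  rw [hg] at this
  simpa using this.symm

lemma mem_span_rows_eq_zero (A : Matrix (Fin k) (Fin n) F) (p : Fin k → Fin n)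
    (hA : IsInvRREF A p) (x : Fin n → F)
    (hx : x ∈ Submodule.span F (Set.range fun i => A i))
    (hp : ∀ i, x (p i) = 0) : x = 0 := by
  obtain ⟨g, hg⟩ := (Submodule.mem_span_range_iff_exists_fun F).1 hx
  have hgz : ∀ i, g i = 0 := by
    intro i
    have := sum_smul_apply_pivot A p hA g i
    rw [hg] at this
    rw [← this, hp i]
  rw [← hg]
  funext j
  simp [hgz]

end Aux

theorem stmt_7 {F : Type*} [Field F] [Fintype F] {k n : ℕ}
    (A B : Matrix (Fin k) (Fin n) F) (pA pB : Fin k → Fin n)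
    (hA : IsInvRREF A pA) (hB : IsInvRREF B pB)
    (hv : identifyingVector pA = identifyingVector pB)
    (U V : Submodule F (Fin n → F))
    (hU : U = Submodule.span F (Set.range fun i => A i))
    (hV : V = Submodule.span F (Set.range fun i => B i))
    -- `c` enumerates, in increasing order, the `n - k` non-pivot columns
    (c : Fin (n - k) → Fin n) (hc : StrictMono c)
    (hcp : ∀ j, (∃ i, c i = j) ↔ ¬∃ i, pA i = j) :
    subDist U V = 2 * rankDist (A.submatrix id c) (B.submatrix id c) := by
  classical
  -- pB = pA
  have hpp : pB = pA := by
    have hr : Set.range pB = Set.range pA := by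
      ext j
      have := congrFun hv j
      simp only [identifyingVector, decide_eq_decide] at this
      simpa [Set.mem_range] using this.symm
    exact Set.range_injOn_strictAnti hB.1 hA.1 hr
  rw [hpp] at hB
  set p := pA with hp
  set D : Matrix (Fin k) (Fin n) F := A - B with hD
  -- rows of D vanish at all pivot columns
  have hDpiv : ∀ i j, D i (p j) = 0 := by
    intro i j
    by_cases h : i = j
    · subst h
      simp [hD, Matrix.sub_apply, hA.2.1 i, hB.2.1 i]
    · simp [hD, Matrix.sub_apply, hA.2.2.2 j i h, hB.2.2.2 j i h]
  -- U ⊔ V = span rows A ⊔ span rows D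
  have hsup : U ⊔ V = Submodule.span F (Set.range fun i => A i)
      ⊔ Submodule.span F (Set.range fun i => D i) := by
    rw [hU, hV]
    apply le_antisymm
    · apply sup_le le_sup_left
      rw [Submodule.span_le]
      rintro _ ⟨i, rfl⟩
      show B i ∈ _
      have : B i = A i - D i := by funext j; simp [hD, Matrix.sub_apply]
      rw [this]
      exact sub_mem
        (Submodule.mem_sup_left (Submodule.subset_span ⟨i, rfl⟩))
        (Submodule.mem_sup_right (Submodule.subset_span ⟨i, rfl⟩))
    · apply sup_le le_sup_left
      rw [Submodule.span_le]
      rintro _ ⟨i, rfl⟩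
      exact sub_mem
        (Submodule.mem_sup_left (Submodule.subset_span ⟨i, rfl⟩))
        (Submodule.mem_sup_right (Submodule.subset_span ⟨i, rfl⟩))
  -- span A ⊓ span D = ⊥
  have hinf : Submodule.span F (Set.range fun i => A i)
      ⊓ Submodule.span F (Set.range fun i => D i) = ⊥ := by
    rw [eq_bot_iff]
    rintro x ⟨hxA, hxD⟩
    have hxp : ∀ i, x (p i) = 0 := by
      intro i
      obtain ⟨g, hg⟩ := (Submodule.mem_span_range_iff_exists_fun F).1 hxD
      rw [← hg, Finset.sum_apply]
      apply Finset.sum_eq_zero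
      intro j _
      simp [hDpiv j i]
    have := mem_span_rows_eq_zero A p hA x hxA hxp
    simp [this]
  -- dimensions
  have hdimU : finrank F U = k := by
    rw [hU, finrank_span_eq_card (rows_linearIndependent A p hA)]
    simp
  have hdimV : finrank F V = k := by
    rw [hV, finrank_span_eq_card (rows_linearIndependent B p hB)]
    simp
  set r := finrank F (Submodule.span F (Set.range fun i => D i)) with hr
  have hsupdim : finrank F (U ⊔ V : Submodule F (Fin n → F)) = k + r := by
    rw [hsup]
    have := Submodule.finrank_sup_add_finrank_inf_eq
      (Submodule.span F (Set.range fun i => A i))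
      (Submodule.span F (Set.range fun i => D i))
    rw [hinf] at this
    simp only [finrank_bot, add_zero] at this
    rw [this, finrank_span_eq_card (rows_linearIndependent A p hA)]
    simp [hr]
  have hinfdim : finrank F (U ⊓ V : Submodule F (Fin n → F)) = k - r := by
    have h2 := Submodule.finrank_sup_add_finrank_inf_eq U V
    rw [hsupdim, hdimU, hdimV] at h2
    omega
  have hrle : r ≤ k := by
    have h2 := Submodule.finrank_sup_add_finrank_inf_eq U V
    rw [hsupdim, hdimU, hdimV] at h2
    omega
  -- rank distance equals r
  have hrank : rankDist (A.submatrix id c) (B.submatrix id c) = r := by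
    have hsub : A.submatrix id c - B.submatrix id c = D.submatrix id c := by
      ext i j; simp [hD]
    rw [rankDist, hsub]
    -- rank of D.submatrix id c = rank D
    have hspan : Submodule.span F (Set.range (D.submatrix id c)ᵀ)
        = Submodule.span F (Set.range Dᵀ) := by
      apply le_antisymm
      · rw [Submodule.span_le]
        rintro _ ⟨i, rfl⟩
        have h1 : (D.submatrix id c)ᵀ i = Dᵀ (c i) := by funext j; rfl
        rw [h1]
        exact Submodule.subset_span ⟨c i, rfl⟩
      · rw [Submodule.span_le]
        rintro _ ⟨j, rfl⟩
        by_cases hj : ∃ i, p i = j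
        · obtain ⟨i, rfl⟩ := hj
          have h1 : Dᵀ (p i) = 0 := by
            funext i'; simp [Matrix.transpose_apply, hDpiv i' i]
          rw [h1]
          exact Submodule.zero_mem _
        · obtain ⟨i, rfl⟩ := (hcp j).2 hj
          have h1 : Dᵀ (c i) = (D.submatrix id c)ᵀ i := by funext j; rfl
          rw [h1]
          exact Submodule.subset_span ⟨i, rfl⟩
    have hcol : (D.submatrix id c).rank = D.rank := by
      rw [Matrix.rank_eq_finrank_span_cols, Matrix.rank_eq_finrank_span_cols]
      exact congrArg (fun S : Submodule F (Fin k → F) => finrank F S) hspan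
    rw [hcol, Matrix.rank_eq_finrank_span_row, hr]
    rfl
  rw [hrank]
  unfold subDist
  rw [hdimU, hdimV, hinfdim]
  omega
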